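/- Let (Ω, P) be a probability space, let X be an almost surely positive random variable and T a real-valued random variable on Ω, and let β > 2, K > 0 be real constants with E[X^{2/β}] < ∞. Then for every s > 0 and every t ∈ ℝ: ∫_{ℝ²} P( (K·‖x‖)^β ≤ s·X and T ≤ t ) dx = (π · s^{2/β} / K²) · E[ X^{2/β} · 𝟙(T ≤ t) ], where the integral is taken with respect to Lebesgue measure on ℝ² and ‖x‖ is the Euclidean norm. (This is the intensity-measure computation underlying the marked propagation invariance lemma: the intensity measure of the marked propagation process {( (K|X_i|)^β/(P_iS_i), T_i )} driven by a planar Poisson process of density λ is Λ(s,t) = λπs^{2/β}K^{−2}·E[(PS)^{2/β}𝟙(T ≤ t)], which depends on the distribution of the propagation effects only through the moment E[(PS)^{2/β}·𝟙(T≤t)].) -/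

import Mathlib

open MeasureTheory Real

/-- intensity computation of the marked propagation invariance lemma:
`∫_{ℝ²} P((K‖x‖)^β ≤ s·X and T ≤ t) dx = (π s^{2/β}/K²)·E[X^{2/β}·𝟙(T ≤ t)]`. -/
theorem statement8 {Ω : Type*} [MeasurableSpace Ω] (P : Measure Ω) [IsProbabilityMeasure P]
    (X T : Ω → ℝ) (hX : Measurable X) (hT : Measurable T)
    (hXpos : ∀ᵐ ω ∂P, 0 < X ω)
    (β K : ℝ) (hβ : 2 < β) (hK : 0 < K)
    (hmom : Integrable (fun ω => X ω ^ (2/β)) P)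
    (s t : ℝ) (hs : 0 < s) :
    (∫ x : EuclideanSpace ℝ (Fin 2),
        (P {ω | (K * ‖x‖) ^ β ≤ s * X ω ∧ T ω ≤ t}).toReal) =
      (π * s ^ (2/β) / K^2) * ∫ ω, X ω ^ (2/β) * (if T ω ≤ t then 1 else 0) ∂P := by
  have hβ0 : (0:ℝ) < β := by linarith
  set E := EuclideanSpace ℝ (Fin 2)
  set μ : Measure E := volume with hμ
  set c : ℝ := π * s ^ (2/β) / K^2 with hc
  have hc0 : 0 ≤ c := by positivity
  set g : Ω → ℝ := fun ω => X ω ^ (2/β) * (if T ω ≤ t then 1 else 0) with hg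
  set S : Set (E × Ω) := {p | (K * ‖p.1‖) ^ β ≤ s * X p.2 ∧ T p.2 ≤ t} with hSdef
  have hS : MeasurableSet S := by
    have h1 : Measurable fun p : E × Ω => (K * ‖p.1‖) ^ β :=
      (Real.continuous_rpow_const hβ0.le).measurable.comp (measurable_fst.norm.const_mul K)
    have h2 : Measurable fun p : E × Ω => s * X p.2 := (hX.comp measurable_snd).const_mul s
    have h3 : Measurable fun p : E × Ω => T p.2 := hT.comp measurable_snd
    exact (measurableSet_le h1 h2).inter (measurableSet_le h3 measurable_const)
  have hgmeas : Measurable g :=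
    ((Real.continuous_rpow_const (by positivity : (0:ℝ) ≤ 2/β)).measurable.comp hX).mul
      (Measurable.ite (measurableSet_le hT measurable_const) measurable_const measurable_const)
  have hgint : Integrable g P := by
    refine hmom.mono hgmeas.aestronglyMeasurable (Filter.Eventually.of_forall fun ω => ?_)
    simp only [hg, norm_mul]
    by_cases h : T ω ≤ t <;> simp [h, abs_nonneg]
  -- slice sets
  have hslice : ∀ x : E, {ω | (K * ‖x‖) ^ β ≤ s * X ω ∧ T ω ≤ t} = Prod.mk x ⁻¹' S := fun _ => rfl
  -- Step 1: integral to lintegral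
  have step1 : (∫ x : E, (P {ω | (K * ‖x‖) ^ β ≤ s * X ω ∧ T ω ≤ t}).toReal ∂μ)
      = (∫⁻ x, P (Prod.mk x ⁻¹' S) ∂μ).toReal := by
    simp_rw [hslice]
    exact integral_toReal (measurable_measure_prodMk_left hS).aemeasurable
      (Filter.Eventually.of_forall fun x => measure_lt_top _ _)
  -- Step 2: Tonelli
  have step2 : (∫⁻ x, P (Prod.mk x ⁻¹' S) ∂μ)
      = ∫⁻ ω, μ ((fun x => (x, ω)) ⁻¹' S) ∂P := by
    have hmeas : AEMeasurable (Function.uncurry fun (x : E) (ω : Ω) => S.indicator 1 (x, ω))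
        (μ.prod P) :=
      ((measurable_const.indicator hS) : Measurable (S.indicator (1 : E × Ω → ENNReal))).aemeasurable
    calc (∫⁻ x, P (Prod.mk x ⁻¹' S) ∂μ)
        = ∫⁻ x, ∫⁻ ω, S.indicator 1 (x, ω) ∂P ∂μ := by
          refine lintegral_congr fun x => ?_
          rw [← lintegral_indicator_one (measurable_prodMk_left hS)]
          rfl
      _ = ∫⁻ ω, ∫⁻ x, S.indicator 1 (x, ω) ∂μ ∂P := lintegral_lintegral_swap hmeas
      _ = ∫⁻ ω, μ ((fun x => (x, ω)) ⁻¹' S) ∂P := by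
          refine lintegral_congr fun ω => ?_
          rw [← lintegral_indicator_one (measurable_prodMk_right hS)]
          rfl
  -- Step 3: compute the inner volume a.e.
  have step3 : ∀ᵐ ω ∂P, μ ((fun x => (x, ω)) ⁻¹' S) = ENNReal.ofReal (c * g ω) := by
    filter_upwards [hXpos] with ω hω
    have hsX : 0 < s * X ω := by positivity
    by_cases hTt : T ω ≤ t
    · have hset : ((fun x : E => (x, ω)) ⁻¹' S)
          = Metric.closedBall (0 : E) ((s * X ω) ^ β⁻¹ / K) := by
        ext x
        simp only [hSdef, Set.mem_preimage, Set.mem_setOf_eq, Metric.mem_closedBall,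
          dist_zero_right, hTt, and_true]
        rw [← Real.le_rpow_inv_iff_of_pos (by positivity) hsX.le hβ0, le_div_iff₀ hK, mul_comm]
      have hR : 0 ≤ (s * X ω) ^ β⁻¹ / K := by positivity
      rw [hset, hμ, EuclideanSpace.volume_closedBall]
      have hcard : (Fintype.card (Fin 2)) = 2 := by simp
      rw [hcard]
      have hΓ : ((2:ℕ):ℝ) / 2 + 1 = 2 := by norm_num
      have hval : Real.sqrt π ^ 2 / Real.Gamma ((2:ℕ)/2 + 1) = π := by
        rw [hΓ, Real.Gamma_two, Real.sq_sqrt pi_nonneg, div_one]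
      rw [hval, ← ENNReal.ofReal_pow hR, ← ENNReal.ofReal_mul (by positivity)]
      congr 1
      have hpow : ((s * X ω) ^ β⁻¹) ^ (2:ℕ) = (s * X ω) ^ (2/β) := by
        rw [← Real.rpow_natCast ((s * X ω) ^ β⁻¹) 2, ← Real.rpow_mul hsX.le]
        norm_num
        rw [div_eq_inv_mul]
      have hmul : (s * X ω) ^ (2/β) = s ^ (2/β) * X ω ^ (2/β) :=
        Real.mul_rpow hs.le hω.le
      simp only [hg, hTt, if_pos, mul_one, hc]
      rw [div_pow, hpow, hmul]
      field_simp
    · have hset : ((fun x : E => (x, ω)) ⁻¹' S) = ∅ := by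
        ext x; simp [hSdef, hTt]
      simp [hset, hg, hTt]
  -- Step 4: lintegral to real integral
  have step4 : (∫⁻ ω, ENNReal.ofReal (c * g ω) ∂P).toReal = c * ∫ ω, g ω ∂P := by
    have hgnn : 0 ≤ᵐ[P] g := by
      filter_upwards [hXpos] with ω hω
      have : 0 ≤ X ω ^ (2/β) := Real.rpow_nonneg hω.le _
      by_cases h : T ω ≤ t <;> simp [hg, h, this]
    have h1 : ∫ ω, g ω ∂P = (∫⁻ ω, ENNReal.ofReal (g ω) ∂P).toReal :=
      integral_eq_lintegral_of_nonneg_ae hgnn hgmeas.aestronglyMeasurable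
    have h2 : (∫⁻ ω, ENNReal.ofReal (c * g ω) ∂P)
        = ENNReal.ofReal c * ∫⁻ ω, ENNReal.ofReal (g ω) ∂P := by
      rw [← lintegral_const_mul' _ _ ENNReal.ofReal_ne_top]
      exact lintegral_congr fun ω => ENNReal.ofReal_mul hc0
    rw [h2, ENNReal.toReal_mul, ENNReal.toReal_ofReal hc0, h1]
  calc (∫ x : E, (P {ω | (K * ‖x‖) ^ β ≤ s * X ω ∧ T ω ≤ t}).toReal ∂μ)
      = (∫⁻ x, P (Prod.mk x ⁻¹' S) ∂μ).toReal := step1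
    _ = (∫⁻ ω, μ ((fun x => (x, ω)) ⁻¹' S) ∂P).toReal := by rw [step2]
    _ = (∫⁻ ω, ENNReal.ofReal (c * g ω) ∂P).toReal := by rw [lintegral_congr_ae step3]
    _ = c * ∫ ω, g ω ∂P := step4
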